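/- Let D = {(t, r) ∈ ℂ × ℝ : |t|² < r}. Then D is a convex set and the function f(t, r) = −ln(1 − |t|²/r) is convex on D (jointly in the pair (t, r), viewing ℂ × ℝ as a real vector space). -/

import Mathlib

open Real

lemma combo_pos {a b r₁ r₂ : ℝ} (ha : 0 ≤ a) (hb : 0 ≤ b) (hab : a + b = 1)
    (h₁ : 0 < r₁) (h₂ : 0 < r₂) : 0 < a * r₁ + b * r₂ := by
  rcases ha.eq_or_lt with h | h
  · have hb1 : b = 1 := by linarith
    simp [← h, hb1, h₂]
  · nlinarith [mul_pos h h₁, mul_nonneg hb h₂.le]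

lemma scalar_key {a b u v r₁ r₂ : ℝ} (ha : 0 ≤ a) (hb : 0 ≤ b) (hab : a + b = 1)
    (h₁ : 0 < r₁) (h₂ : 0 < r₂) :
    (a*u + b*v)^2 / (a*r₁ + b*r₂) ≤ a * (u^2/r₁) + b * (v^2/r₂) := by
  have hR : 0 < a*r₁ + b*r₂ := combo_pos ha hb hab h₁ h₂
  have hrw : a * (u^2/r₁) + b * (v^2/r₂) = (a*u^2*r₂ + b*v^2*r₁)/(r₁*r₂) := by
    field_simp
  rw [hrw, div_le_div_iff₀ hR (by positivity)]
  nlinarith [mul_nonneg (mul_nonneg ha hb) (sq_nonneg (u*r₂ - v*r₁))]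

lemma abs_smul_add (a b : ℝ) (ha : 0 ≤ a) (hb : 0 ≤ b) (t₁ t₂ : ℂ) :
    ‖a • t₁ + b • t₂‖ ≤ a * ‖t₁‖ + b * ‖t₂‖ := by
  calc ‖a • t₁ + b • t₂‖
      ≤ ‖a • t₁‖ + ‖b • t₂‖ := norm_add_le _ _
    _ = a * ‖t₁‖ + b * ‖t₂‖ := by
        rw [norm_smul, norm_smul, Real.norm_of_nonneg ha, Real.norm_of_nonneg hb]

lemma Q_key {a b : ℝ} (ha : 0 ≤ a) (hb : 0 ≤ b) (hab : a + b = 1)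
    {t₁ t₂ : ℂ} {r₁ r₂ : ℝ} (h₁ : 0 < r₁) (h₂ : 0 < r₂) :
    ‖a • t₁ + b • t₂‖ ^ 2 / (a * r₁ + b * r₂)
      ≤ a * (‖t₁‖ ^ 2 / r₁) + b * (‖t₂‖ ^ 2 / r₂) := by
  have hR : 0 < a*r₁ + b*r₂ := combo_pos ha hb hab h₁ h₂
  have h1 : ‖a • t₁ + b • t₂‖ ≤ a * ‖t₁‖ + b * ‖t₂‖ :=
    abs_smul_add a b ha hb t₁ t₂
  have h2 : ‖a • t₁ + b • t₂‖ ^ 2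
      ≤ (a * ‖t₁‖ + b * ‖t₂‖) ^ 2 := by
    have := norm_nonneg (a • t₁ + b • t₂)
    nlinarith
  calc ‖a • t₁ + b • t₂‖ ^ 2 / (a * r₁ + b * r₂)
      ≤ (a * ‖t₁‖ + b * ‖t₂‖) ^ 2 / (a * r₁ + b * r₂) := by gcongr
    _ ≤ a * (‖t₁‖ ^ 2 / r₁) + b * (‖t₂‖ ^ 2 / r₂) :=
        scalar_key ha hb hab h₁ h₂

/-- The set `D = {(t, r) ∈ ℂ × ℝ : |t|² < r}` is convex and the function
`f(t, r) = −ln(1 − |t|²/r)` is convex on `D` (jointly, over ℝ). -/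
theorem stmt0 :
    Convex ℝ {p : ℂ × ℝ | ‖p.1‖ ^ 2 < p.2} ∧
      ConvexOn ℝ {p : ℂ × ℝ | ‖p.1‖ ^ 2 < p.2}
        (fun p : ℂ × ℝ => -Real.log (1 - ‖p.1‖ ^ 2 / p.2)) := by
  set D : Set (ℂ × ℝ) := {p : ℂ × ℝ | ‖p.1‖ ^ 2 < p.2} with hD
  have hmem : ∀ p : ℂ × ℝ, p ∈ D → ‖p.1‖ ^ 2 < p.2 := fun p hp => hp
  have hpos : ∀ p : ℂ × ℝ, p ∈ D → 0 < p.2 := fun p hp =>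
    lt_of_le_of_lt (sq_nonneg _) (hmem p hp)
  have hDconv : Convex ℝ D := by
    intro x hx y hy a b ha hb hab
    have hx2 := hpos x hx
    have hy2 := hpos y hy
    have hQ := Q_key ha hb hab (t₁ := x.1) (t₂ := y.1) hx2 hy2
    have hAx : 0 < 1 - ‖x.1‖ ^ 2 / x.2 := by
      have : ‖x.1‖ ^ 2 / x.2 < 1 := (div_lt_one hx2).2 (hmem x hx)
      linarith
    have hAy : 0 < 1 - ‖y.1‖ ^ 2 / y.2 := by
      have : ‖y.1‖ ^ 2 / y.2 < 1 := (div_lt_one hy2).2 (hmem y hy)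
      linarith
    show ‖(a • x + b • y).1‖ ^ 2 < (a • x + b • y).2
    have h1 : (a • x + b • y).1 = a • x.1 + b • y.1 := rfl
    have h2 : (a • x + b • y).2 = a * x.2 + b * y.2 := rfl
    rw [h1, h2]
    have hR : 0 < a * x.2 + b * y.2 := combo_pos ha hb hab hx2 hy2
    have hlt : a * (‖x.1‖ ^ 2 / x.2) + b * (‖y.1‖ ^ 2 / y.2) < 1 := by
      have := combo_pos ha hb hab hAx hAy
      nlinarith
    exact (div_lt_one hR).1 (lt_of_le_of_lt hQ hlt)
  refine ⟨hDconv, hDconv, ?_⟩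
  intro x hx y hy a b ha hb hab
  have hx2 := hpos x hx
  have hy2 := hpos y hy
  have hQ := Q_key ha hb hab (t₁ := x.1) (t₂ := y.1) hx2 hy2
  set Qx := ‖x.1‖ ^ 2 / x.2 with hQx
  set Qy := ‖y.1‖ ^ 2 / y.2 with hQy
  have hAx : 0 < 1 - Qx := by
    have : Qx < 1 := (div_lt_one hx2).2 (hmem x hx)
    linarith
  have hAy : 0 < 1 - Qy := by
    have : Qy < 1 := (div_lt_one hy2).2 (hmem y hy)
    linarith
  have h1 : (a • x + b • y).1 = a • x.1 + b • y.1 := rfl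
  have h2 : (a • x + b • y).2 = a * x.2 + b * y.2 := rfl
  show -Real.log (1 - ‖(a • x + b • y).1‖ ^ 2 / (a • x + b • y).2)
      ≤ a • -Real.log (1 - Qx) + b • -Real.log (1 - Qy)
  rw [h1, h2, smul_eq_mul, smul_eq_mul]
  set Qz := ‖a • x.1 + b • y.1‖ ^ 2 / (a * x.2 + b * y.2) with hQz
  have hcomb : a * (1 - Qx) + b * (1 - Qy) ≤ 1 - Qz := by nlinarith
  have hcombpos : 0 < a * (1 - Qx) + b * (1 - Qy) := combo_pos ha hb hab hAx hAy
  have hlog1 : a * Real.log (1 - Qx) + b * Real.log (1 - Qy)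
      ≤ Real.log (a * (1 - Qx) + b * (1 - Qy)) := by
    have := (strictConcaveOn_log_Ioi.concaveOn).2 (Set.mem_Ioi.2 hAx) (Set.mem_Ioi.2 hAy)
      ha hb hab
    simpa [smul_eq_mul] using this
  have hlog2 : Real.log (a * (1 - Qx) + b * (1 - Qy)) ≤ Real.log (1 - Qz) :=
    Real.log_le_log hcombpos hcomb
  linarith
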